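/- If the loss function is piecewise affine in ξ, i.e., ℓ(x, ξ) = max_{j∈[J]} a_j(x)ᵀξ + b_j(x), then the sample-average distributionally robust problem min_{x∈X, λ≥0} ε²λ + (1/M)Σ_{m∈[M]} sup_{ω∈ℝ^R}(ℓ(x, ω) − λ‖ω − ξ_m‖²) is equivalent to the second-order conic program: minimize ε²λ + (1/M)Σ_m γ_m over x ∈ X, λ ≥ 0, γ ∈ ℝ^M, subject to, for all j ∈ [J] and m ∈ [M], ‖(2λξ_m + a_j(x), λξ_mᵀξ_m + γ_m − b_j(x) − λ)‖ ≤ λξ_mᵀξ_m + γ_m − b_j(x) + λ and λξ_mᵀξ_m + γ_m ≥ b_j(x); i.e., the two problems have the same optimal value and the same optimal decisions x. -/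

import Mathlib

open Matrix

noncomputable section

/-- Euclidean norm of a vector `v : ι → ℝ`. -/
def eNorm {ι : Type*} [Fintype ι] (v : ι → ℝ) : ℝ := Real.sqrt (∑ i, v i ^ 2)

/-- The inner objective of the Lagrangian-dual sample-average DRO problem:
`ε²λ + (1/M) Σ_m sup_ω (max_j a_j(x)ᵀω + b_j(x) − λ‖ω − ξ_m‖²)`, valued in `EReal`. -/
def droObj {n R J M : ℕ} (hJ : 0 < J) (ε : ℝ)
    (a : Fin J → (Fin n → ℝ) → Fin R → ℝ) (b : Fin J → (Fin n → ℝ) → ℝ)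
    (ξ : Fin M → Fin R → ℝ) (x : Fin n → ℝ) (lam : ℝ) : EReal :=
  ((ε ^ 2 * lam : ℝ) : EReal) +
    (((M : ℝ)⁻¹ : ℝ) : EReal) *
      ∑ m : Fin M, ⨆ ω : Fin R → ℝ,
        (((Finset.univ.sup' ⟨⟨0, hJ⟩, Finset.mem_univ _⟩ fun j => a j x ⬝ᵥ ω + b j x) -
            lam * eNorm (ω - ξ m) ^ 2 : ℝ) : EReal)

/-- The second-order conic constraints of the reformulation. -/
def socpFeas {n R J M : ℕ} (a : Fin J → (Fin n → ℝ) → Fin R → ℝ)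
    (b : Fin J → (Fin n → ℝ) → ℝ) (ξ : Fin M → Fin R → ℝ)
    (x : Fin n → ℝ) (lam : ℝ) (γ : Fin M → ℝ) : Prop :=
  ∀ (j : Fin J) (m : Fin M),
    Real.sqrt (eNorm (fun i => 2 * lam * ξ m i + a j x i) ^ 2 +
        (lam * (ξ m ⬝ᵥ ξ m) + γ m - b j x - lam) ^ 2) ≤
      lam * (ξ m ⬝ᵥ ξ m) + γ m - b j x + lam ∧
    b j x ≤ lam * (ξ m ⬝ᵥ ξ m) + γ m

/-- The linear objective of the SOCP reformulation. -/
def socpObj {M : ℕ} (ε lam : ℝ) (γ : Fin M → ℝ) : ℝ := ε ^ 2 * lam + (M : ℝ)⁻¹ * ∑ m, γ m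

namespace DroAux

lemma eNorm_sq {ι : Type*} [Fintype ι] (v : ι → ℝ) : eNorm v ^ 2 = ∑ i, v i ^ 2 :=
  Real.sq_sqrt (Finset.sum_nonneg fun _ _ => sq_nonneg _)

lemma coe_sum {α : Type*} (s : Finset α) (f : α → ℝ) :
    ((∑ i ∈ s, f i : ℝ) : EReal) = ∑ i ∈ s, ((f i : ℝ) : EReal) :=
  map_sum (⟨⟨(fun r : ℝ => (r : EReal)), EReal.coe_zero⟩, EReal.coe_add⟩ : ℝ →+ EReal) f s

lemma sum_top_fin (M : ℕ) (hM : 0 < M) : ∑ _m : Fin M, (⊤ : EReal) = ⊤ := by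
  rw [Finset.sum_const, Finset.card_univ, Fintype.card_fin]
  rcases Nat.exists_eq_succ_of_ne_zero hM.ne' with ⟨k, rfl⟩
  rw [succ_nsmul]
  exact EReal.add_top_of_ne_bot
    (lt_of_lt_of_le EReal.bot_lt_zero (nsmul_nonneg le_top k)).ne'

lemma iSup_sup' {α ι κ : Type*} [CompleteLinearOrder α] [Nonempty ι] (s : Finset κ)
    (H : s.Nonempty) (f : κ → ι → α) :
    ⨆ i, s.sup' H (fun k => f k i) = s.sup' H (fun k => ⨆ i, f k i) := by
  apply le_antisymm
  · exact iSup_le fun i => Finset.sup'_le _ _ fun k hk =>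
      le_trans (le_iSup (f k) i) (Finset.le_sup' (fun k => ⨆ i, f k i) hk)
  · exact Finset.sup'_le _ _ fun k hk => iSup_mono fun i => Finset.le_sup' (fun k => f k i) hk

lemma sup_pos {R : ℕ} {lam : ℝ} (hl : 0 < lam) (a ξ : Fin R → ℝ) (b : ℝ) :
    (⨆ ω : Fin R → ℝ, (((a ⬝ᵥ ω + b - lam * eNorm (ω - ξ) ^ 2 : ℝ)) : EReal)) =
      ((a ⬝ᵥ ξ + b + (∑ i, a i ^ 2) / (4 * lam) : ℝ) : EReal) := by
  have h4 : (0:ℝ) < 4 * lam := by positivity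
  apply le_antisymm
  · apply iSup_le fun ω => ?_
    rw [EReal.coe_le_coe_iff]
    have key : ∀ i ∈ Finset.univ (α := Fin R),
        4 * lam * (a i * ω i) - 4 * lam ^ 2 * (ω i - ξ i) ^ 2 ≤
          4 * lam * (a i * ξ i) + a i ^ 2 := fun i _ => by
      nlinarith [sq_nonneg (a i - 2 * lam * (ω i - ξ i))]
    have hsum := Finset.sum_le_sum key
    rw [Finset.sum_add_distrib, Finset.sum_sub_distrib, ← Finset.mul_sum, ← Finset.mul_sum,
      ← Finset.mul_sum] at hsum
    have hE : eNorm (ω - ξ) ^ 2 = ∑ i, (ω i - ξ i) ^ 2 := by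
      rw [eNorm_sq]; rfl
    have hdot : a ⬝ᵥ ω = ∑ i, a i * ω i := rfl
    have hdot2 : a ⬝ᵥ ξ = ∑ i, a i * ξ i := rfl
    rw [hE, hdot, hdot2]
    have hdiv : 4 * lam * ((∑ i, a i ^ 2) / (4 * lam)) = ∑ i, a i ^ 2 := by
      field_simp
    refine le_of_mul_le_mul_left ?_ h4
    nlinarith [hsum]
  · apply le_iSup_of_le (fun i => ξ i + a i / (2 * lam))
    apply le_of_eq
    rw [EReal.coe_eq_coe_iff]
    have hE : eNorm ((fun i => ξ i + a i / (2 * lam)) - ξ) ^ 2 =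
        (∑ i, a i ^ 2) / (2 * lam) ^ 2 := by
      rw [eNorm_sq, Finset.sum_div]
      exact Finset.sum_congr rfl fun i _ => by
        simp only [Pi.sub_apply]; field_simp; ring
    have hdot : a ⬝ᵥ (fun i => ξ i + a i / (2 * lam)) =
        a ⬝ᵥ ξ + (∑ i, a i ^ 2) / (2 * lam) := by
      simp only [dotProduct, mul_add]
      rw [Finset.sum_add_distrib, Finset.sum_div]
      congr 1
      exact Finset.sum_congr rfl fun i _ => by field_simp
    rw [hE, hdot]
    field_simp
    ring

lemma sup_zero_const {R : ℕ} (a ξ : Fin R → ℝ) (b : ℝ) (ha : a = 0) :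
    (⨆ ω : Fin R → ℝ, (((a ⬝ᵥ ω + b - (0:ℝ) * eNorm (ω - ξ) ^ 2 : ℝ)) : EReal)) =
      ((b : ℝ) : EReal) := by
  subst ha; simp [dotProduct]

lemma sup_zero_top {R : ℕ} (a ξ : Fin R → ℝ) (b : ℝ) (ha : a ≠ 0) :
    (⨆ ω : Fin R → ℝ, (((a ⬝ᵥ ω + b - (0:ℝ) * eNorm (ω - ξ) ^ 2 : ℝ)) : EReal)) = ⊤ := by
  rw [EReal.eq_top_iff_forall_lt]
  intro y
  obtain ⟨i, hi⟩ : ∃ i, a i ≠ 0 := by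
    by_contra h; push_neg at h; exact ha (funext h)
  set t : ℝ := (y + 1 - b - a ⬝ᵥ ξ) / a i with ht
  refine lt_of_lt_of_le ?_ (le_iSup _ (fun k => ξ k + if k = i then t else 0))
  rw [show (0:ℝ) * eNorm ((fun k => ξ k + if k = i then t else 0) - ξ) ^ 2 = 0 by ring,
    sub_zero, EReal.coe_lt_coe_iff]
  have : a ⬝ᵥ (fun k => ξ k + if k = i then t else 0) = a ⬝ᵥ ξ + a i * t := by
    simp only [dotProduct, mul_add]
    rw [Finset.sum_add_distrib]
    congr 1
    rw [Finset.sum_eq_single i]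
    · simp
    · intro k _ hk; simp [hk]
    · simp
  rw [this, ht, mul_div_cancel₀ _ hi]
  linarith

lemma soc_pos {R : ℕ} {lam : ℝ} (hl : 0 < lam) (a ξ : Fin R → ℝ) (b γ : ℝ) :
    (Real.sqrt (eNorm (fun i => 2 * lam * ξ i + a i) ^ 2 +
        (lam * (ξ ⬝ᵥ ξ) + γ - b - lam) ^ 2) ≤ lam * (ξ ⬝ᵥ ξ) + γ - b + lam ∧
      b ≤ lam * (ξ ⬝ᵥ ξ) + γ) ↔
    a ⬝ᵥ ξ + b + (∑ i, a i ^ 2) / (4 * lam) ≤ γ := by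
  have h4 : (0:ℝ) < 4 * lam := by positivity
  have hQ : ξ ⬝ᵥ ξ = ∑ i, ξ i ^ 2 := by simp [dotProduct, sq]
  have hdot : a ⬝ᵥ ξ = ∑ i, a i * ξ i := rfl
  have hA : eNorm (fun i => 2 * lam * ξ i + a i) ^ 2 =
      4 * lam ^ 2 * (∑ i, ξ i ^ 2) + 4 * lam * (∑ i, a i * ξ i) + ∑ i, a i ^ 2 := by
    rw [eNorm_sq, Finset.mul_sum, Finset.mul_sum, ← Finset.sum_add_distrib,
      ← Finset.sum_add_distrib]
    exact Finset.sum_congr rfl fun i _ => by ring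
  have hAnn : (0:ℝ) ≤ 4 * lam ^ 2 * (∑ i, ξ i ^ 2) + 4 * lam * (∑ i, a i * ξ i) +
      ∑ i, a i ^ 2 := by rw [← hA]; positivity
  rw [Real.sqrt_le_iff, hA, hQ, hdot]
  constructor
  · rintro ⟨⟨h1, h2⟩, _⟩
    have hd : (∑ i, a i ^ 2) / (4 * lam) ≤ γ - b - ∑ i, a i * ξ i := by
      rw [div_le_iff₀ h4]; nlinarith [h2]
    linarith
  · intro h
    have hd : (∑ i, a i ^ 2) / (4 * lam) ≤ γ - b - ∑ i, a i * ξ i := by linarith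
    have key : ∑ i, a i ^ 2 ≤ (γ - b - ∑ i, a i * ξ i) * (4 * lam) :=
      (div_le_iff₀ h4).mp hd
    refine ⟨⟨by nlinarith [key, hAnn], by nlinarith [key]⟩, by nlinarith [key, hAnn]⟩

lemma soc_zero {R : ℕ} (a ξ : Fin R → ℝ) (b γ : ℝ) :
    (Real.sqrt (eNorm (fun i => 2 * (0:ℝ) * ξ i + a i) ^ 2 +
        ((0:ℝ) * (ξ ⬝ᵥ ξ) + γ - b - 0) ^ 2) ≤ (0:ℝ) * (ξ ⬝ᵥ ξ) + γ - b + 0 ∧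
      b ≤ (0:ℝ) * (ξ ⬝ᵥ ξ) + γ) ↔ (a = 0 ∧ b ≤ γ) := by
  have hA : eNorm (fun i => 2 * (0:ℝ) * ξ i + a i) ^ 2 = ∑ i, a i ^ 2 := by
    rw [eNorm_sq]; exact Finset.sum_congr rfl fun i _ => by ring
  rw [Real.sqrt_le_iff, hA]
  simp only [zero_mul, zero_add, sub_zero, add_zero]
  constructor
  · rintro ⟨⟨h1, h2⟩, h3⟩
    have hS : ∑ i, a i ^ 2 ≤ 0 := by nlinarith
    have haz : ∀ i ∈ Finset.univ (α := Fin R), a i ^ 2 = 0 := by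
      intro i _
      have h5 : a i ^ 2 ≤ ∑ x, a x ^ 2 :=
        Finset.single_le_sum (fun i _ => sq_nonneg (a i)) (Finset.mem_univ i)
      nlinarith [sq_nonneg (a i)]
    exact ⟨funext fun i => pow_eq_zero_iff (n := 2) (by norm_num) |>.mp
      (haz i (Finset.mem_univ i)), by linarith⟩
  · rintro ⟨rfl, h⟩
    simp only [Pi.zero_apply, ne_eq, OfNat.ofNat_ne_zero, not_false_eq_true, zero_pow,
      Finset.sum_const_zero, zero_add]
    exact ⟨⟨by linarith, le_refl _⟩, h⟩


variable {n R J M : ℕ}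

def ejR (lam : ℝ) (a ξ : Fin R → ℝ) (b : ℝ) : ℝ := a ⬝ᵥ ξ + b + (∑ i, a i ^ 2) / (4 * lam)

lemma ejR_zero {lam : ℝ} (a ξ : Fin R → ℝ) (b : ℝ) (ha : a = 0) : ejR lam a ξ b = b := by
  subst ha; simp [ejR, dotProduct]

def sFun (hJ : 0 < J) (a : Fin J → (Fin n → ℝ) → Fin R → ℝ) (b : Fin J → (Fin n → ℝ) → ℝ)
    (ξ : Fin M → Fin R → ℝ) (x : Fin n → ℝ) (lam : ℝ) : Fin M → ℝ := fun m =>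
  Finset.univ.sup' ⟨⟨0, hJ⟩, Finset.mem_univ _⟩ fun j => ejR lam (a j x) (ξ m) (b j x)

lemma inner_sup (hJ : 0 < J) (a : Fin J → (Fin n → ℝ) → Fin R → ℝ)
    (b : Fin J → (Fin n → ℝ) → ℝ) (ξm : Fin R → ℝ) (x : Fin n → ℝ) (lam : ℝ) :
    (⨆ ω : Fin R → ℝ,
        (((Finset.univ.sup' ⟨⟨0, hJ⟩, Finset.mem_univ _⟩ fun j => a j x ⬝ᵥ ω + b j x) -
            lam * eNorm (ω - ξm) ^ 2 : ℝ) : EReal)) =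
      Finset.univ.sup' ⟨⟨0, hJ⟩, Finset.mem_univ _⟩ fun j =>
        ⨆ ω : Fin R → ℝ, (((a j x ⬝ᵥ ω + b j x - lam * eNorm (ω - ξm) ^ 2 : ℝ)) : EReal) := by
  have step1 : ∀ ω : Fin R → ℝ,
      ((Finset.univ.sup' ⟨⟨0, hJ⟩, Finset.mem_univ _⟩ fun j => a j x ⬝ᵥ ω + b j x) -
          lam * eNorm (ω - ξm) ^ 2 : ℝ) =
        Finset.univ.sup' ⟨⟨0, hJ⟩, Finset.mem_univ _⟩ fun j =>
          (a j x ⬝ᵥ ω + b j x - lam * eNorm (ω - ξm) ^ 2 : ℝ) := by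
    intro ω
    exact Finset.comp_sup'_eq_sup'_comp _ (fun y : ℝ => y - lam * eNorm (ω - ξm) ^ 2)
      (fun p q => by exact (max_sub_sub_right p q _).symm)
  have step2 : ∀ ω : Fin R → ℝ,
      (((Finset.univ.sup' ⟨⟨0, hJ⟩, Finset.mem_univ _⟩ fun j =>
          (a j x ⬝ᵥ ω + b j x - lam * eNorm (ω - ξm) ^ 2 : ℝ)) : ℝ) : EReal) =
        Finset.univ.sup' ⟨⟨0, hJ⟩, Finset.mem_univ _⟩ fun j =>
          (((a j x ⬝ᵥ ω + b j x - lam * eNorm (ω - ξm) ^ 2 : ℝ)) : EReal) := by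
    intro ω
    exact Finset.comp_sup'_eq_sup'_comp _ (fun y : ℝ => (y : EReal))
      (fun p q => by
        rcases le_total p q with h | h
        · simp [max_eq_right h, max_eq_right (EReal.coe_le_coe_iff.mpr h)]
        · simp [max_eq_left h, max_eq_left (EReal.coe_le_coe_iff.mpr h)])
  calc (⨆ ω : Fin R → ℝ, _) = ⨆ ω : Fin R → ℝ,
        Finset.univ.sup' ⟨⟨0, hJ⟩, Finset.mem_univ _⟩ (fun j =>
          (((a j x ⬝ᵥ ω + b j x - lam * eNorm (ω - ξm) ^ 2 : ℝ)) : EReal)) := by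
        apply iSup_congr; intro ω; rw [step1 ω, step2 ω]
    _ = _ := iSup_sup' _ _ _

lemma droObj_eq (hJ : 0 < J) (ε : ℝ) (a : Fin J → (Fin n → ℝ) → Fin R → ℝ)
    (b : Fin J → (Fin n → ℝ) → ℝ) (ξ : Fin M → Fin R → ℝ) (x : Fin n → ℝ) {lam : ℝ}
    (hlam : 0 ≤ lam) (hgood : 0 < lam ∨ ∀ j, a j x = 0) :
    droObj hJ ε a b ξ x lam = ((socpObj ε lam (sFun hJ a b ξ x lam) : ℝ) : EReal) := by
  have hj : ∀ (m : Fin M) (j : Fin J),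
      (⨆ ω : Fin R → ℝ, (((a j x ⬝ᵥ ω + b j x - lam * eNorm (ω - ξ m) ^ 2 : ℝ)) : EReal)) =
        ((ejR lam (a j x) (ξ m) (b j x) : ℝ) : EReal) := by
    intro m j
    rcases lt_or_eq_of_le hlam with hl | hzero
    · exact sup_pos hl _ _ _
    · have hz : ∀ j, a j x = 0 := by
        rcases hgood with hl' | hz
        · exact absurd hl' (by rw [← hzero]; exact lt_irrefl 0)
        · exact hz
      rw [ejR_zero _ _ _ (hz j), ← hzero, sup_zero_const _ _ _ (hz j)]
  have hsup : ∀ m : Fin M,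
      (⨆ ω : Fin R → ℝ,
        (((Finset.univ.sup' ⟨⟨0, hJ⟩, Finset.mem_univ _⟩ fun j => a j x ⬝ᵥ ω + b j x) -
            lam * eNorm (ω - ξ m) ^ 2 : ℝ) : EReal)) = ((sFun hJ a b ξ x lam m : ℝ) : EReal) := by
    intro m
    rw [inner_sup hJ]
    rw [Finset.sup'_congr (⟨⟨0, hJ⟩, Finset.mem_univ _⟩ : (Finset.univ (α := Fin J)).Nonempty)
      rfl (fun j _ => hj m j)]
    symm
    exact Finset.comp_sup'_eq_sup'_comp _ (fun y : ℝ => (y : EReal))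
      (fun p q => by
        rcases le_total p q with h | h
        · simp [max_eq_right h, max_eq_right (EReal.coe_le_coe_iff.mpr h)]
        · simp [max_eq_left h, max_eq_left (EReal.coe_le_coe_iff.mpr h)])
  rw [droObj]
  rw [Finset.sum_congr rfl (fun m _ => hsup m), ← coe_sum, ← EReal.coe_mul, ← EReal.coe_add]
  rfl

lemma droObj_top (hJ : 0 < J) (hM : 0 < M) (ε : ℝ) (a : Fin J → (Fin n → ℝ) → Fin R → ℝ)
    (b : Fin J → (Fin n → ℝ) → ℝ) (ξ : Fin M → Fin R → ℝ) (x : Fin n → ℝ)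
    (hbad : ∃ j, a j x ≠ 0) :
    droObj hJ ε a b ξ x 0 = ⊤ := by
  obtain ⟨j0, hj0⟩ := hbad
  have hsup : ∀ m : Fin M,
      (⨆ ω : Fin R → ℝ,
        (((Finset.univ.sup' ⟨⟨0, hJ⟩, Finset.mem_univ _⟩ fun j => a j x ⬝ᵥ ω + b j x) -
            (0:ℝ) * eNorm (ω - ξ m) ^ 2 : ℝ) : EReal)) = ⊤ := by
    intro m
    rw [inner_sup hJ]
    rw [eq_top_iff, ← sup_zero_top (a j0 x) (ξ m) (b j0 x) hj0]
    exact Finset.le_sup' (fun j =>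
      ⨆ ω : Fin R → ℝ, (((a j x ⬝ᵥ ω + b j x - (0:ℝ) * eNorm (ω - ξ m) ^ 2 : ℝ)) : EReal))
      (Finset.mem_univ j0)
  rw [droObj]
  rw [Finset.sum_congr rfl (fun m _ => hsup m), sum_top_fin M hM,
    EReal.coe_mul_top_of_pos (by positivity : (0:ℝ) < (M:ℝ)⁻¹)]
  exact EReal.add_top_of_ne_bot (EReal.coe_ne_bot _)

lemma feas_pos {lam : ℝ} (hl : 0 < lam) (a : Fin J → (Fin n → ℝ) → Fin R → ℝ)
    (b : Fin J → (Fin n → ℝ) → ℝ) (ξ : Fin M → Fin R → ℝ) (x : Fin n → ℝ) (γ : Fin M → ℝ) :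
    socpFeas a b ξ x lam γ ↔ ∀ (j : Fin J) (m : Fin M), ejR lam (a j x) (ξ m) (b j x) ≤ γ m := by
  unfold socpFeas ejR
  exact forall₂_congr fun j m => soc_pos hl _ _ _ _

lemma feas_zero (a : Fin J → (Fin n → ℝ) → Fin R → ℝ)
    (b : Fin J → (Fin n → ℝ) → ℝ) (ξ : Fin M → Fin R → ℝ) (x : Fin n → ℝ) (γ : Fin M → ℝ) :
    socpFeas a b ξ x 0 γ ↔ ∀ (j : Fin J) (m : Fin M), a j x = 0 ∧ b j x ≤ γ m := by
  unfold socpFeas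
  exact forall₂_congr fun j m => soc_zero _ _ _ _

lemma mainA (hJ : 0 < J) (hM : 0 < M) (ε : ℝ) (a : Fin J → (Fin n → ℝ) → Fin R → ℝ)
    (b : Fin J → (Fin n → ℝ) → ℝ) (ξ : Fin M → Fin R → ℝ) (x : Fin n → ℝ) {lam : ℝ}
    (hlam : 0 ≤ lam) :
    droObj hJ ε a b ξ x lam =
      ⨅ (γ : Fin M → ℝ) (_ : socpFeas a b ξ x lam γ), ((socpObj ε lam γ : ℝ) : EReal) := by
  by_cases hgood : 0 < lam ∨ ∀ j, a j x = 0
  · rw [droObj_eq hJ ε a b ξ x hlam hgood]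
    set s := sFun hJ a b ξ x lam with hs
    have hfeas : socpFeas a b ξ x lam s := by
      rcases lt_or_eq_of_le hlam with hl | hzero
      · exact (feas_pos hl a b ξ x s).mpr fun j m =>
          Finset.le_sup' (fun j => ejR lam (a j x) (ξ m) (b j x)) (Finset.mem_univ j)
      · have hz : ∀ j, a j x = 0 :=
          hgood.resolve_left (by rw [← hzero]; exact lt_irrefl 0)
        rw [← hzero] at hs ⊢
        refine (feas_zero a b ξ x s).mpr fun j m => ⟨hz j, ?_⟩
        rw [← ejR_zero (lam := 0) (a j x) (ξ m) (b j x) (hz j)]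
        exact hs ▸ Finset.le_sup' (fun j => ejR 0 (a j x) (ξ m) (b j x)) (Finset.mem_univ j)
    have hmono : ∀ γ, socpFeas a b ξ x lam γ → socpObj ε lam s ≤ socpObj ε lam γ := by
      intro γ hγ
      have hle : ∀ m, s m ≤ γ m := by
        rcases lt_or_eq_of_le hlam with hl | hzero
        · intro m
          exact Finset.sup'_le _ _ fun j _ => ((feas_pos hl a b ξ x γ).mp hγ) j m
        · rw [← hzero] at hs hγ
          intro m
          rw [hs]
          exact Finset.sup'_le _ _ fun j _ => by
            rw [ejR_zero _ _ _ (((feas_zero a b ξ x γ).mp hγ j m).1)]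
            exact ((feas_zero a b ξ x γ).mp hγ j m).2
      unfold socpObj
      exact add_le_add_right
        (mul_le_mul_of_nonneg_left (Finset.sum_le_sum fun m _ => hle m) (by positivity)) _
    apply le_antisymm
    · exact le_iInf₂ fun γ hγ => EReal.coe_le_coe_iff.mpr (hmono γ hγ)
    · exact iInf₂_le s hfeas
  · push_neg at hgood
    obtain ⟨hlz, j0, hj0⟩ := hgood
    have hz : lam = 0 := le_antisymm hlz hlam
    subst hz
    rw [droObj_top hJ hM ε a b ξ x ⟨j0, hj0⟩]
    symm
    rw [eq_top_iff]
    exact le_iInf fun γ => le_iInf fun hγ =>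
      (hj0 ((feas_zero a b ξ x γ).mp hγ j0 ⟨0, hM⟩).1).elim

lemma sFun_feas (hJ : 0 < J) (a : Fin J → (Fin n → ℝ) → Fin R → ℝ)
    (b : Fin J → (Fin n → ℝ) → ℝ) (ξ : Fin M → Fin R → ℝ) (x : Fin n → ℝ) {lam : ℝ}
    (hlam : 0 ≤ lam) (hgood : 0 < lam ∨ ∀ j, a j x = 0) :
    socpFeas a b ξ x lam (sFun hJ a b ξ x lam) := by
  rcases lt_or_eq_of_le hlam with hl | hzero
  · exact (feas_pos hl a b ξ x _).mpr fun j m =>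
      Finset.le_sup' (fun j => ejR lam (a j x) (ξ m) (b j x)) (Finset.mem_univ j)
  · have hz : ∀ j, a j x = 0 :=
      hgood.resolve_left (by rw [← hzero]; exact lt_irrefl 0)
    rw [← hzero]
    refine (feas_zero a b ξ x _).mpr fun j m => ⟨hz j, ?_⟩
    rw [← ejR_zero (lam := 0) (a j x) (ξ m) (b j x) (hz j)]
    exact Finset.le_sup' (fun j => ejR 0 (a j x) (ξ m) (b j x)) (Finset.mem_univ j)

end DroAux

/-- **SOCP reformulation of the type-2 Wasserstein DRO problem with piecewise affine loss.**
If `ℓ(x, ξ) = max_{j∈[J]} a_j(x)ᵀξ + b_j(x)`, then the sample-average distributionally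
robust problem `min_{x∈X, λ≥0} ε²λ + (1/M)Σ_m sup_ω (ℓ(x,ω) − λ‖ω−ξ_m‖²)` is equivalent
to the stated second-order conic program: the two problems have the same optimal value and
the same optimal decisions `x`. -/
theorem dro_socp_reformulation {n R J M : ℕ} (hJ : 0 < J) (hM : 0 < M)
    (X : Set (Fin n → ℝ)) (ε : ℝ)
    (a : Fin J → (Fin n → ℝ) → Fin R → ℝ) (b : Fin J → (Fin n → ℝ) → ℝ)
    (ξ : Fin M → Fin R → ℝ) :
    (⨅ (x : Fin n → ℝ) (_ : x ∈ X) (lam : ℝ) (_ : 0 ≤ lam), droObj hJ ε a b ξ x lam) =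
      (⨅ (x : Fin n → ℝ) (_ : x ∈ X) (lam : ℝ) (_ : 0 ≤ lam) (γ : Fin M → ℝ)
        (_ : socpFeas a b ξ x lam γ), ((socpObj ε lam γ : ℝ) : EReal)) ∧
    ∀ x ∈ X,
      ((∃ lam : ℝ, 0 ≤ lam ∧
          droObj hJ ε a b ξ x lam =
            ⨅ (x' : Fin n → ℝ) (_ : x' ∈ X) (lam' : ℝ) (_ : 0 ≤ lam'),
              droObj hJ ε a b ξ x' lam') ↔
        (∃ (lam : ℝ) (γ : Fin M → ℝ), 0 ≤ lam ∧ socpFeas a b ξ x lam γ ∧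
          ((socpObj ε lam γ : ℝ) : EReal) =
            ⨅ (x' : Fin n → ℝ) (_ : x' ∈ X) (lam' : ℝ) (_ : 0 ≤ lam') (γ' : Fin M → ℝ)
              (_ : socpFeas a b ξ x' lam' γ'), ((socpObj ε lam' γ' : ℝ) : EReal))) := by
  have hpart1 :
      (⨅ (x : Fin n → ℝ) (_ : x ∈ X) (lam : ℝ) (_ : 0 ≤ lam), droObj hJ ε a b ξ x lam) =
        (⨅ (x : Fin n → ℝ) (_ : x ∈ X) (lam : ℝ) (_ : 0 ≤ lam) (γ : Fin M → ℝ)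
          (_ : socpFeas a b ξ x lam γ), ((socpObj ε lam γ : ℝ) : EReal)) := by
    refine iInf_congr fun x => iInf_congr fun _ => iInf_congr fun lam =>
      iInf_congr fun hlam => DroAux.mainA hJ hM ε a b ξ x hlam
  refine ⟨hpart1, fun x hx => ?_⟩
  constructor
  · rintro ⟨lam, hlam, heq⟩
    have hub : (⨅ (x' : Fin n → ℝ) (_ : x' ∈ X) (lam' : ℝ) (_ : 0 ≤ lam'),
        droObj hJ ε a b ξ x' lam') ≤ droObj hJ ε a b ξ x 1 :=
      iInf₂_le_of_le x hx (iInf₂_le 1 zero_le_one)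
    have h1 := DroAux.droObj_eq hJ ε a b ξ x zero_le_one (Or.inl one_pos)
    have hVne : (⨅ (x' : Fin n → ℝ) (_ : x' ∈ X) (lam' : ℝ) (_ : 0 ≤ lam'),
        droObj hJ ε a b ξ x' lam') ≠ ⊤ := by
      intro hT
      rw [hT, h1] at hub
      exact absurd hub (not_le.mpr (EReal.coe_lt_top _))
    have hgood : 0 < lam ∨ ∀ j, a j x = 0 := by
      by_contra hg
      push_neg at hg
      obtain ⟨hlz, j0, hj0⟩ := hg
      have hz : lam = 0 := le_antisymm hlz hlam
      rw [hz, DroAux.droObj_top hJ hM ε a b ξ x ⟨j0, hj0⟩] at heq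
      exact hVne heq.symm
    refine ⟨lam, DroAux.sFun hJ a b ξ x lam, hlam,
      DroAux.sFun_feas hJ a b ξ x hlam hgood, ?_⟩
    rw [← DroAux.droObj_eq hJ ε a b ξ x hlam hgood, heq, hpart1]
  · rintro ⟨lam, γ, hlam, hfeas, heq⟩
    refine ⟨lam, hlam, le_antisymm ?_ (iInf₂_le_of_le x hx (iInf₂_le lam hlam))⟩
    calc droObj hJ ε a b ξ x lam
        = ⨅ (γ' : Fin M → ℝ) (_ : socpFeas a b ξ x lam γ'),
            ((socpObj ε lam γ' : ℝ) : EReal) := DroAux.mainA hJ hM ε a b ξ x hlam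
      _ ≤ ((socpObj ε lam γ : ℝ) : EReal) := iInf₂_le γ hfeas
      _ = _ := heq.trans hpart1.symm

end
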